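/- Let ω0 > 0, 0 < ζ < 1, A = [[0, 1], [−ω0², −2ζω0]], α := ω0 ζ, β̃ := ω0·√(1 − ζ²), and γ := arctan(−α/β̃). Then ∫_0^{2π} exp((2π−τ)·A)·(e^{ατ}/β̃)·(0, sin(β̃τ))ᵀ dτ = (y11, y12)ᵀ and ∫_0^{2π} exp((2π−τ)·A)·(e^{ατ}/β̃)·(0, −ω0·cos(β̃τ + γ))ᵀ dτ = (y21, y22)ᵀ, where y11 = (e^{−2πα}/(4ω0²))·( cos(2πβ̃)·(1 − e^{4πα})/α + sin(2πβ̃)·(1 + e^{4πα})/β̃ ), y12 = sinh(2πα)·sin(2πβ̃)/(2αβ̃), y21 = −sinh(2πα)·sin(2πβ̃)/(2αβ̃), and y22 = (e^{−2πα}/4)·( cos(2πβ̃)·(1 − e^{4πα})/α − sin(2πβ̃)·(1 + e^{4πα})/β̃ ). -/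

import Mathlib

open Real

lemma exp_smul_one_add_smul_J (J : Matrix (Fin 2) (Fin 2) ℝ) (hJ : J * J = -1) (x y : ℝ) :
    NormedSpace.exp (x • (1 : Matrix (Fin 2) (Fin 2) ℝ) + y • J) =
      (Real.exp x * Real.cos y) • (1 : Matrix (Fin 2) (Fin 2) ℝ)
        + (Real.exp x * Real.sin y) • J := by
  letI : SeminormedRing (Matrix (Fin 2) (Fin 2) ℝ) := Matrix.linftyOpSemiNormedRing
  letI : NormedRing (Matrix (Fin 2) (Fin 2) ℝ) := Matrix.linftyOpNormedRing
  letI : NormedAlgebra ℝ (Matrix (Fin 2) (Fin 2) ℝ) := Matrix.linftyOpNormedAlgebra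
  have hφ : Continuous (Complex.liftAux J hJ) :=
    LinearMap.continuous_of_finiteDimensional (Complex.liftAux J hJ).toLinearMap
  have h1 : x • (1 : Matrix (Fin 2) (Fin 2) ℝ) + y • J
      = Complex.liftAux J hJ ⟨x, y⟩ := by
    rw [Complex.liftAux_apply]
    simp [Algebra.algebraMap_eq_smul_one]
  rw [h1]
  erw [← NormedSpace.map_exp (Complex.liftAux J hJ) hφ]
  have h2 : NormedSpace.exp (⟨x, y⟩ : ℂ) = Complex.exp ⟨x, y⟩ := by
    rw [Complex.exp_eq_exp_ℂ]
  rw [h2, Complex.liftAux_apply]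
  have hre : (Complex.exp ⟨x, y⟩).re = Real.exp x * Real.cos y := by
    rw [Complex.exp_re]
  have him : (Complex.exp ⟨x, y⟩).im = Real.exp x * Real.sin y := by
    rw [Complex.exp_im]
  rw [hre, him]
  simp [Algebra.algebraMap_eq_smul_one]

lemma hasDerivAt_aux (a b p q r : ℝ) (τ : ℝ) :
    HasDerivAt
      (fun t => Real.exp (a * t) *
        (p + q * Real.cos (b * t) ^ 2 + r * Real.sin (b * t) * Real.cos (b * t)))
      (Real.exp (a * τ) *
        ((a * p - b * r) + (a * q + 2 * b * r) * Real.cos (b * τ) ^ 2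
          + (a * r - 2 * b * q) * Real.sin (b * τ) * Real.cos (b * τ))) τ := by
  have hid : HasDerivAt (fun t : ℝ => a * t) a τ := by
    simpa using (hasDerivAt_id τ).const_mul a
  have hidb : HasDerivAt (fun t : ℝ => b * t) b τ := by
    simpa using (hasDerivAt_id τ).const_mul b
  have he := hid.exp
  have hc := hidb.cos
  have hs := hidb.sin
  have h1 := ((hc.pow 2).const_mul q)
  have h2 := ((hs.mul hc).const_mul r)
  have hin := ((hasDerivAt_const τ p).add h1).add h2
  have := he.mul hin
  refine (this.congr_deriv ?_).congr_of_eventuallyEq (Filter.Eventually.of_forall fun t => ?_)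
  rotate_left
  · simp only [Pi.mul_apply, Pi.add_apply, Pi.pow_apply]; ring
  · simp only [Pi.mul_apply, Pi.add_apply, Pi.pow_apply]
    push_cast
    symm
    linear_combination (Real.exp (a * τ) * b * r) * Real.sin_sq_add_cos_sq (b * τ)

noncomputable def Fexpr (a b p q r K t : ℝ) : ℝ :=
  K * (Real.exp (a * t) *
    (p + q * Real.cos (b * t) ^ 2 + r * Real.sin (b * t) * Real.cos (b * t)))

noncomputable def Dexpr (a b p q r K t : ℝ) : ℝ :=
  K * (Real.exp (a * t) *
    ((a * p - b * r) + (a * q + 2 * b * r) * Real.cos (b * t) ^ 2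
      + (a * r - 2 * b * q) * Real.sin (b * t) * Real.cos (b * t)))

lemma hasDerivAt_Fexpr (a b p q r K τ : ℝ) :
    HasDerivAt (fun t => Fexpr a b p q r K t) (Dexpr a b p q r K τ) τ := by
  unfold Fexpr Dexpr
  exact (hasDerivAt_aux a b p q r τ).const_mul K

lemma continuous_Dexpr (a b p q r K : ℝ) : Continuous (fun t => Dexpr a b p q r K t) := by
  unfold Dexpr; fun_prop

set_option maxHeartbeats 3200000 in
theorem jacobian_under_damped_oscillator
    (ω0 ζ : ℝ) (hω0 : 0 < ω0) (hζ0 : 0 < ζ) (hζ1 : ζ < 1)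
    (A : Matrix (Fin 2) (Fin 2) ℝ) (hA : A = !![0, 1; -ω0 ^ 2, -2 * ζ * ω0])
    (α β γ : ℝ) (hα : α = ω0 * ζ) (hβ : β = ω0 * Real.sqrt (1 - ζ ^ 2))
    (hγ : γ = Real.arctan (-(α / β)))
    (y11 y12 y21 y22 : ℝ)
    (h11 : y11 = (Real.exp (-(2 * π * α)) / (4 * ω0 ^ 2)) *
      (Real.cos (2 * π * β) * (1 - Real.exp (4 * π * α)) / α
        + Real.sin (2 * π * β) * (1 + Real.exp (4 * π * α)) / β))
    (h12 : y12 = Real.sinh (2 * π * α) * Real.sin (2 * π * β) / (2 * α * β))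
    (h21 : y21 = -(Real.sinh (2 * π * α) * Real.sin (2 * π * β) / (2 * α * β)))
    (h22 : y22 = (Real.exp (-(2 * π * α)) / 4) *
      (Real.cos (2 * π * β) * (1 - Real.exp (4 * π * α)) / α
        - Real.sin (2 * π * β) * (1 + Real.exp (4 * π * α)) / β)) :
    (∫ τ in (0:ℝ)..(2 * π), (NormedSpace.exp ((2 * π - τ) • A)).mulVec
        ((Real.exp (α * τ) / β) • ![0, Real.sin (β * τ)])) = ![y11, y12] ∧
    (∫ τ in (0:ℝ)..(2 * π), (NormedSpace.exp ((2 * π - τ) • A)).mulVec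
        ((Real.exp (α * τ) / β) • ![0, -(ω0 * Real.cos (β * τ + γ))])) = ![y21, y22] := by
  have hπ : (0:ℝ) < π := Real.pi_pos
  have hαpos : 0 < α := by rw [hα]; positivity
  have h1ζ : 0 < 1 - ζ ^ 2 := by nlinarith
  have hβpos : 0 < β := by rw [hβ]; positivity
  have hw : α ^ 2 + β ^ 2 = ω0 ^ 2 := by
    rw [hα, hβ, mul_pow, mul_pow, Real.sq_sqrt h1ζ.le]; ring
  have hαne : α ≠ 0 := ne_of_gt hαpos
  have hβne : β ≠ 0 := ne_of_gt hβpos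
  have hω0ne : ω0 ≠ 0 := ne_of_gt hω0
  have hwne : α ^ 2 + β ^ 2 ≠ 0 := by positivity
  -- trig values of γ
  have h1x : (1 : ℝ) + (-(α / β)) ^ 2 = (ω0 / β) ^ 2 := by
    field_simp
    linear_combination hw
  have hsqx : Real.sqrt (1 + (-(α / β)) ^ 2) = ω0 / β := by
    rw [h1x, Real.sqrt_sq (by positivity)]
  have hγc : Real.cos γ = β / ω0 := by
    rw [hγ, Real.cos_arctan, hsqx, one_div_div]
  have hγs : Real.sin γ = -(α / ω0) := by
    rw [hγ, Real.sin_arctan, hsqx]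
    field_simp
  have hcosγ : ∀ τ : ℝ, ω0 * Real.cos (β * τ + γ)
      = β * Real.cos (β * τ) + α * Real.sin (β * τ) := by
    intro τ
    rw [Real.cos_add, hγc, hγs]
    field_simp
    ring
  -- the "i" matrix
  set J : Matrix (Fin 2) (Fin 2) ℝ := !![α/β, 1/β; -(ω0^2)/β, -(α/β)] with hJdef
  have hJ : J * J = -1 := by
    ext i j
    fin_cases i <;> fin_cases j <;>
      simp [hJdef, Matrix.mul_apply, Fin.sum_univ_two, Matrix.one_apply] <;>
      field_simp <;>
      first
        | linear_combination -hw
        | linear_combination hw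
        | linear_combination (β^2-1) * hw
        | linear_combination (1-β^2) * hw
        | linear_combination β^2 * hw
        | linear_combination (-β^2) * hw
        | ring
  have hAJ : ∀ s : ℝ, s • A = (-(α * s)) • (1 : Matrix (Fin 2) (Fin 2) ℝ) + (β * s) • J := by
    intro s
    subst hA
    ext i j
    fin_cases i <;> fin_cases j <;>
      simp [hJdef, Matrix.one_apply, hα] <;> field_simp <;> ring
  have hexp : ∀ s : ℝ, NormedSpace.exp (s • A)
      = (Real.exp (-(α * s)) * Real.cos (β * s)) • (1 : Matrix (Fin 2) (Fin 2) ℝ)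
        + (Real.exp (-(α * s)) * Real.sin (β * s)) • J := by
    intro s
    rw [hAJ s, exp_smul_one_add_smul_J J hJ]
  have hmv : ∀ (c d w : ℝ),
      (c • (1 : Matrix (Fin 2) (Fin 2) ℝ) + d • J).mulVec ![0, w]
        = ![d * (1/β) * w, c * w + d * (-(α/β)) * w] := by
    intro c d w
    funext i
    fin_cases i <;>
      simp [hJdef, Matrix.mulVec, dotProduct, Fin.sum_univ_two, Matrix.one_apply] <;>
      ring
  -- abbreviations
  set C := Real.cos (2 * π * β) with hCdef
  set S := Real.sin (2 * π * β) with hSdef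
  have hpy2 : S ^ 2 + C ^ 2 = 1 := by
    rw [hCdef, hSdef]; exact Real.sin_sq_add_cos_sq _
  set K : ℝ := Real.exp (-(2 * π * α)) / β ^ 2 with hKdef
  -- coefficients of the antiderivatives
  set p1 : ℝ := (-(2*α^2+β^2)*C + α*β*S)/(4*α*(α^2+β^2)) with hp1
  set q1 : ℝ := (α*C - β*S)/(2*(α^2+β^2)) with hq1
  set r1 : ℝ := (β*C + α*S)/(2*(α^2+β^2)) with hr1
  set p2 : ℝ := (β*S + 2*α*C)/(4*α) with hp2
  set q2 : ℝ := -C/2 with hq2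
  set r2 : ℝ := -S/2 with hr2
  set p3 : ℝ := (2*α*C - β*S)/(4*α) with hp3
  set p4 : ℝ := -(α*β*S + 2*α^2*C + β^2*C)/(4*α) with hp4
  set q4 : ℝ := (α*C + β*S)/2 with hq4
  set r4 : ℝ := (α*S - β*C)/2 with hr4
  have hee : ∀ τ : ℝ, Real.exp (2 * α * τ) = Real.exp (α * τ) * Real.exp (α * τ) := by
    intro τ; rw [← Real.exp_add]; ring_nf
  have harg : ∀ τ : ℝ, β * (2 * π - τ) = 2 * π * β - β * τ := fun τ => by ring
  have harg2 : ∀ τ : ℝ, -(α * (2 * π - τ)) = -(2 * π * α) + α * τ := fun τ => by ring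
  have hX : Real.exp (4 * π * α) = Real.exp (2 * π * α) * Real.exp (2 * π * α) := by
    rw [← Real.exp_add]; ring_nf
  have hXn : Real.exp (-(2 * π * α)) = (Real.exp (2 * π * α))⁻¹ := Real.exp_neg _
  have hsinh : Real.sinh (2 * π * α)
      = (Real.exp (2 * π * α) - (Real.exp (2 * π * α))⁻¹) / 2 := by
    rw [Real.sinh_eq, Real.exp_neg]
  constructor
  · -- first integral
    have key1 : ∀ τ : ℝ, (NormedSpace.exp ((2 * π - τ) • A)).mulVec
        ((Real.exp (α * τ) / β) • ![0, Real.sin (β * τ)])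
        = ![Dexpr (2*α) β p1 q1 r1 K τ, Dexpr (2*α) β p2 q2 r2 K τ] := by
      intro τ
      rw [hexp (2 * π - τ)]
      have hv : (Real.exp (α * τ) / β) • (![0, Real.sin (β * τ)] : Fin 2 → ℝ)
          = ![0, Real.exp (α * τ) / β * Real.sin (β * τ)] := by
        simp [Matrix.smul_cons, Matrix.smul_empty]
      rw [hv, hmv, harg, harg2, Real.sin_sub, Real.cos_sub, Real.exp_add]
      funext i
      fin_cases i
      · simp only [Fin.zero_eta, Matrix.cons_val_zero, Dexpr]
        rw [hee, hp1, hq1, hr1, hKdef]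
        rw [← hCdef, ← hSdef]
        field_simp
        rw [mul_comm τ β]
        linear_combination ((-8)*C*(α^2+β^2)) * Real.sin_sq_add_cos_sq (β * τ)
      · simp only [Fin.mk_one, Matrix.cons_val_one, Matrix.head_cons, Matrix.cons_val_zero, Dexpr]
        rw [hee, hp2, hq2, hr2, hKdef]
        rw [← hCdef, ← hSdef]
        field_simp
        rw [mul_comm τ β]
        linear_combination (8*(C*α + S*β)) * Real.sin_sq_add_cos_sq (β * τ)
    have hF : ∀ τ ∈ Set.uIcc (0:ℝ) (2*π), HasDerivAt
        (fun t => (![Fexpr (2*α) β p1 q1 r1 K t, Fexpr (2*α) β p2 q2 r2 K t] : Fin 2 → ℝ))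
        (![Dexpr (2*α) β p1 q1 r1 K τ, Dexpr (2*α) β p2 q2 r2 K τ] : Fin 2 → ℝ) τ := by
      intro τ _
      rw [hasDerivAt_pi]
      intro i
      fin_cases i <;> simpa using hasDerivAt_Fexpr _ _ _ _ _ _ τ
    have hInt : IntervalIntegrable
        (fun τ => (![Dexpr (2*α) β p1 q1 r1 K τ, Dexpr (2*α) β p2 q2 r2 K τ] : Fin 2 → ℝ))
        MeasureTheory.volume 0 (2*π) := by
      apply Continuous.intervalIntegrable
      apply continuous_pi
      intro i
      fin_cases i <;> simpa using continuous_Dexpr _ _ _ _ _ _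
    have hI := intervalIntegral.integral_eq_sub_of_hasDerivAt hF hInt
    simp only [key1]
    rw [hI]
    funext i
    fin_cases i
    · simp only [Pi.sub_apply, Fin.zero_eta, Matrix.cons_val_zero, Fexpr]
      rw [hp1, hq1, hr1, hKdef, h11]
      rw [show (2:ℝ) * α * (2 * π) = 2*π*α + 2*π*α from by ring, Real.exp_add,
        show β * (2 * π) = 2*π*β from by ring]
      try rw [hX]
      try rw [hXn]
      simp only [mul_zero, Real.exp_zero, Real.cos_zero, Real.sin_zero]
      rw [← hCdef, ← hSdef, ← hw]
      field_simp
      linear_combination (4*Real.exp (2*π*α)^2*α^2*C) * hpy2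
    · simp only [Pi.sub_apply, Fin.mk_one, Matrix.cons_val_one, Matrix.head_cons, Matrix.cons_val_zero, Fexpr]
      rw [hp2, hq2, hr2, hKdef, h12, hsinh]
      rw [show (2:ℝ) * α * (2 * π) = 2*π*α + 2*π*α from by ring, Real.exp_add,
        show β * (2 * π) = 2*π*β from by ring]
      try rw [hX]
      try rw [hXn]
      simp only [mul_zero, Real.exp_zero, Real.cos_zero, Real.sin_zero]
      rw [← hCdef, ← hSdef]
      field_simp
      linear_combination ((-8)*Real.exp (2*π*α)^2*α*C) * hpy2
  · -- second integral
    have key2 : ∀ τ : ℝ, (NormedSpace.exp ((2 * π - τ) • A)).mulVec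
        ((Real.exp (α * τ) / β) • ![0, -(ω0 * Real.cos (β * τ + γ))])
        = ![Dexpr (2*α) β p3 q2 r2 K τ, Dexpr (2*α) β p4 q4 r4 K τ] := by
      intro τ
      rw [hexp (2 * π - τ)]
      have hv : (Real.exp (α * τ) / β) • (![0, -(ω0 * Real.cos (β * τ + γ))] : Fin 2 → ℝ)
          = ![0, Real.exp (α * τ) / β * (-(β * Real.cos (β * τ) + α * Real.sin (β * τ)))] := by
        rw [show -(ω0 * Real.cos (β * τ + γ)) = -(β * Real.cos (β * τ) + α * Real.sin (β * τ))
          from by rw [hcosγ τ]]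
        simp [Matrix.smul_cons, Matrix.smul_empty]
      rw [hv, hmv, harg, harg2, Real.sin_sub, Real.cos_sub, Real.exp_add]
      funext i
      fin_cases i
      · simp only [Fin.zero_eta, Matrix.cons_val_zero, Dexpr]
        rw [hee, hp3, hq2, hr2, hKdef]
        rw [← hCdef, ← hSdef]
        field_simp
        rw [mul_comm τ β]
        linear_combination (8*C*α) * Real.sin_sq_add_cos_sq (β * τ)
      · simp only [Fin.mk_one, Matrix.cons_val_one, Matrix.head_cons, Matrix.cons_val_zero, Dexpr]
        rw [hee, hp4, hq4, hr4, hKdef]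
        rw [← hCdef, ← hSdef]
        field_simp
        rw [mul_comm τ β]
        linear_combination ((-8)*α*(C*α + S*β)) * Real.sin_sq_add_cos_sq (β * τ)
    have hF : ∀ τ ∈ Set.uIcc (0:ℝ) (2*π), HasDerivAt
        (fun t => (![Fexpr (2*α) β p3 q2 r2 K t, Fexpr (2*α) β p4 q4 r4 K t] : Fin 2 → ℝ))
        (![Dexpr (2*α) β p3 q2 r2 K τ, Dexpr (2*α) β p4 q4 r4 K τ] : Fin 2 → ℝ) τ := by
      intro τ _
      rw [hasDerivAt_pi]
      intro i
      fin_cases i <;> simpa using hasDerivAt_Fexpr _ _ _ _ _ _ τ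
    have hInt : IntervalIntegrable
        (fun τ => (![Dexpr (2*α) β p3 q2 r2 K τ, Dexpr (2*α) β p4 q4 r4 K τ] : Fin 2 → ℝ))
        MeasureTheory.volume 0 (2*π) := by
      apply Continuous.intervalIntegrable
      apply continuous_pi
      intro i
      fin_cases i <;> simpa using continuous_Dexpr _ _ _ _ _ _
    have hI := intervalIntegral.integral_eq_sub_of_hasDerivAt hF hInt
    simp only [key2]
    rw [hI]
    funext i
    fin_cases i
    · simp only [Pi.sub_apply, Fin.zero_eta, Matrix.cons_val_zero, Fexpr]
      rw [hp3, hq2, hr2, hKdef, h21, hsinh]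
      rw [show (2:ℝ) * α * (2 * π) = 2*π*α + 2*π*α from by ring, Real.exp_add,
        show β * (2 * π) = 2*π*β from by ring]
      try rw [hX]
      try rw [hXn]
      simp only [mul_zero, Real.exp_zero, Real.cos_zero, Real.sin_zero]
      rw [← hCdef, ← hSdef]
      field_simp
      linear_combination ((-8)*Real.exp (2*π*α)^2*α*C) * hpy2
    · simp only [Pi.sub_apply, Fin.mk_one, Matrix.cons_val_one, Matrix.head_cons, Matrix.cons_val_zero, Fexpr]
      rw [hp4, hq4, hr4, hKdef, h22]
      rw [show (2:ℝ) * α * (2 * π) = 2*π*α + 2*π*α from by ring, Real.exp_add,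
        show β * (2 * π) = 2*π*β from by ring]
      try rw [hX]
      try rw [hXn]
      simp only [mul_zero, Real.exp_zero, Real.cos_zero, Real.sin_zero]
      rw [← hCdef, ← hSdef]
      field_simp
      linear_combination (4*Real.exp (2*π*α)^2*α^2*C) * hpy2
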